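/- Let P and M be real d × k matrices such that Pᵀ · M = Mᵀ · P, the rank of P equals d, and the rank of M equals d. Then there exists a unique matrix Q : Matrix (Fin d) (Fin d) ℝ such that Q is symmetric (Qᵀ = Q), Q is invertible, and M = Q · P. -/

import Mathlib

open Matrix

/-- A square matrix of full rank is a unit. -/
lemma isUnit_of_rank_eq_card {d : ℕ} (A : Matrix (Fin d) (Fin d) ℝ)
    (h : A.rank = d) : IsUnit A := by
  rw [← Matrix.mulVec_surjective_iff_isUnit]
  have hrange : LinearMap.range A.mulVecLin = ⊤ := by
    apply Submodule.eq_top_of_finrank_eq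
    rw [← Matrix.rank, h]
    simp
  have := LinearMap.range_eq_top.mp hrange
  intro y
  obtain ⟨x, hx⟩ := this y
  exact ⟨x, hx⟩

/-- If `P` and `M` are real `d × k` matrices of rank `d` with `Pᵀ·M = Mᵀ·P`,
then there is a unique symmetric invertible `d × d` matrix `Q` with
`M = Q·P`. -/
theorem exists_unique_symmetric_matrix
    {d k : ℕ} (P M : Matrix (Fin d) (Fin k) ℝ)
    (hsym : Pᵀ * M = Mᵀ * P)
    (hrankP : P.rank = d) (hrankM : M.rank = d) :
    ∃! Q : Matrix (Fin d) (Fin d) ℝ, Qᵀ = Q ∧ IsUnit Q ∧ M = Q * P := by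
  set A : Matrix (Fin d) (Fin d) ℝ := P * Pᵀ with hAdef
  have hA : IsUnit A :=
    isUnit_of_rank_eq_card A (by rw [hAdef, Matrix.rank_self_mul_transpose, hrankP])
  have hAdet : IsUnit A.det := (Matrix.isUnit_iff_isUnit_det A).mp hA
  set N : Matrix (Fin d) (Fin d) ℝ := A⁻¹ with hNdef
  have hAN : A * N = 1 := Matrix.mul_nonsing_inv A hAdet
  have hNA : N * A = 1 := Matrix.nonsing_inv_mul A hAdet
  -- cancellation lemmas
  have hP1 : ∀ B : Matrix (Fin d) (Fin k) ℝ, Pᵀ * B = 0 → B = 0 := by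
    intro B hB
    calc B = (N * A) * B := by rw [hNA, Matrix.one_mul]
    _ = N * (P * (Pᵀ * B)) := by rw [hAdef]; simp only [Matrix.mul_assoc]
    _ = 0 := by rw [hB, Matrix.mul_zero, Matrix.mul_zero]
  have hP2 : ∀ C : Matrix (Fin d) (Fin d) ℝ, C * P = 0 → C = 0 := by
    intro C hC
    calc C = C * (A * N) := by rw [hAN, Matrix.mul_one]
    _ = (C * P) * Pᵀ * N := by rw [hAdef]; simp only [Matrix.mul_assoc]
    _ = 0 := by rw [hC, Matrix.zero_mul, Matrix.zero_mul]
  -- the candidate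
  set Q : Matrix (Fin d) (Fin d) ℝ := M * Pᵀ * N with hQdef
  have hQP : Q * P = M := by
    have key : Pᵀ * (Q * P - M) = 0 := by
      have : Pᵀ * (Q * P) = Mᵀ * (A * N) * P := by
        rw [hQdef, hAdef]
        calc Pᵀ * (M * Pᵀ * N * P) = (Pᵀ * M) * (Pᵀ * N * P) := by
              simp only [Matrix.mul_assoc]
        _ = (Mᵀ * P) * (Pᵀ * N * P) := by rw [hsym]
        _ = Mᵀ * (P * Pᵀ * N) * P := by simp only [Matrix.mul_assoc]
      rw [Matrix.mul_sub, this, hAN, Matrix.mul_one, ← hsym, sub_self]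
    have := hP1 _ key
    rwa [sub_eq_zero] at this
  have hNsymm : Nᵀ = N := by
    rw [hNdef, Matrix.transpose_nonsing_inv]
    congr 1
    rw [hAdef, Matrix.transpose_mul, Matrix.transpose_transpose]
  have hQsymm : Qᵀ = Q := by
    have key1 : Pᵀ * ((Q - Qᵀ) * P) = 0 := by
      have h1 : Pᵀ * (Q * P) = Pᵀ * M := by rw [hQP]
      have h2 : Pᵀ * (Qᵀ * P) = Pᵀ * M := by
        have ht : Pᵀ * (Qᵀ * P) = (Pᵀ * (Q * P))ᵀ := by
          simp only [Matrix.transpose_mul, Matrix.transpose_transpose, Matrix.mul_assoc]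
        rw [ht, h1, Matrix.transpose_mul, Matrix.transpose_transpose, ← hsym]
      rw [Matrix.sub_mul, Matrix.mul_sub, h1, h2, sub_self]
    have key2 : (Q - Qᵀ) * P = 0 := hP1 _ key1
    have := hP2 _ key2
    rw [sub_eq_zero] at this
    exact this.symm
  have hB : IsUnit (M * Mᵀ) :=
    isUnit_of_rank_eq_card _ (by rw [Matrix.rank_self_mul_transpose, hrankM])
  have hBdet : IsUnit (M * Mᵀ).det := (Matrix.isUnit_iff_isUnit_det _).mp hB
  have hQunit : IsUnit Q := by
    refine (Matrix.isUnit_iff_isUnit_det _).mpr (Matrix.isUnit_det_of_right_inverse (B := P * Mᵀ * (M * Mᵀ)⁻¹) ?_)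
    calc Q * (P * Mᵀ * (M * Mᵀ)⁻¹) = (Q * P) * Mᵀ * (M * Mᵀ)⁻¹ := by
          simp only [Matrix.mul_assoc]
    _ = (M * Mᵀ) * (M * Mᵀ)⁻¹ := by rw [hQP]
    _ = 1 := Matrix.mul_nonsing_inv _ hBdet
  refine ⟨Q, ⟨hQsymm, hQunit, hQP.symm⟩, ?_⟩
  intro Q' ⟨_, _, hQ'P⟩
  have : (Q' - Q) * P = 0 := by
    rw [Matrix.sub_mul, hQP, ← hQ'P, sub_self]
  have := hP2 _ this
  rwa [sub_eq_zero] at this
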